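/- Every run ρ in a finite directed labeled graph (automaton) admits a simple cycle decomposition: there exist a run γ with the same first and last state, of length less than |Q(ρ)|², visiting exactly the states Q(ρ), and a multiset of simple cycles, each using only states from Q(ρ), such that ρ can be obtained from γ by repeatedly injecting these simple cycles. -/

import Mathlib

variable {V : Type*} [DecidableEq V]

/-- A run (walk) in the directed graph `E`, represented as its list of visited
vertices: nonempty and consecutive vertices are joined by an edge. -/
def IsRun (E : V → V → Prop) (ρ : List V) : Prop :=
  ρ ≠ [] ∧ ρ.Chain' E

/-- A simple cycle: a run of positive length whose first and last vertices
coincide and in which every vertex occurs at most twice. -/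
def IsSimpleCycle (E : V → V → Prop) (c : List V) : Prop :=
  IsRun E c ∧ 2 ≤ c.length ∧ c.head? = c.getLast? ∧ ∀ v : V, c.count v ≤ 2

/-- `ObtainedBy E γ cs ρ` : the run `ρ` is obtained from the run `γ` by
injecting, in some order, the cycles of the multiset `cs` (each cycle
`q :: ω ++ [q]` is injected at an occurrence of its first state `q`). -/
inductive ObtainedBy (E : V → V → Prop) : List V → Multiset (List V) → List V → Prop where
  | refl (γ : List V) : ObtainedBy E γ 0 γ
  | step (γ : List V) (cs : Multiset (List V)) (l r ω : List V) (q : V) :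
      ObtainedBy E γ cs (l ++ q :: r) →
      ObtainedBy E γ ((q :: ω ++ [q]) ::ₘ cs) (l ++ q :: ω ++ q :: r)

lemma split_first_repeat : ∀ (l : List V), ¬ l.Nodup →
    ∃ (l₁ : List V) (x : V) (l₂ l₃ : List V),
      l = l₁ ++ x :: l₂ ++ x :: l₃ ∧ (x :: l₂).Nodup := by
  intro l
  induction l with
  | nil => intro h; exact absurd List.nodup_nil h
  | cons a t ih =>
    intro h
    by_cases ht : t.Nodup
    · have ha : a ∈ t := by
        by_contra hna
        exact h (List.nodup_cons.2 ⟨hna, ht⟩)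
      obtain ⟨s, u, rfl⟩ := List.append_of_mem ha
      refine ⟨[], a, s, u, by simp, ?_⟩
      refine List.nodup_cons.2 ⟨?_, ht.of_append_left⟩
      have hd := List.disjoint_of_nodup_append ht
      exact fun hs => hd hs List.mem_cons_self
    · obtain ⟨l₁, x, l₂, l₃, he, hn⟩ := ih ht
      exact ⟨a :: l₁, x, l₂, l₃, by rw [he]; simp, hn⟩

lemma extract_good_cycle (ρ : List V) (hne : ρ ≠ [])
    (hlen : ρ.toFinset.card ^ 2 ≤ ρ.length - 1) :
    ∃ (l : List V) (q : V) (ω r : List V),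
      ρ = l ++ q :: ω ++ q :: r ∧ (q :: ω).Nodup ∧
      (l ++ q :: r).toFinset = ρ.toFinset := by
  set m := ρ.toFinset.card with hm
  have hn1 : 1 ≤ ρ.length := List.length_pos_iff.2 hne
  have hn : m ^ 2 + 1 ≤ ρ.length := by omega
  have hmm : m ^ 2 = m * m := sq m
  -- Step A: find a "good" window: a window of m consecutive vertices
  -- all of whose vertices reappear after the window.
  have hgood : ∃ k, k < m ∧ ∀ v ∈ (ρ.drop (k * m)).take m, v ∈ ρ.drop ((k + 1) * m) := by
    by_contra hbad
    push_neg at hbad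
    have hbad' : ∀ k : ℕ, ∃ v : V,
        k < m → v ∈ (ρ.drop (k * m)).take m ∧ v ∉ ρ.drop ((k + 1) * m) := by
      intro k
      by_cases hk : k < m
      · obtain ⟨v, h1, h2⟩ := hbad k hk
        exact ⟨v, fun _ => ⟨h1, h2⟩⟩
      · exact ⟨ρ.head hne, fun h => absurd h hk⟩
    choose f hf using hbad'
    have hdropsub : ∀ a b : ℕ, a ≤ b → ρ.drop b ⊆ ρ.drop a := by
      intro a b hab v hv
      have he2 : (ρ.drop a).drop (b - a) = ρ.drop b := by
        rw [List.drop_drop]; congr 1; omega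
      rw [← he2] at hv
      exact List.drop_subset _ _ hv
    have key : ∀ a b, a < b → b < m → f a ≠ f b := by
      intro a b hab hb he
      apply (hf a (hab.trans hb)).2
      rw [he]
      have h1 : f b ∈ ρ.drop (b * m) := List.take_subset _ _ (hf b hb).1
      exact hdropsub _ _ (Nat.mul_le_mul_right m (by omega)) h1
    have hinj : Set.InjOn f (Finset.range m) := by
      intro a ha b hb hab
      simp only [Finset.coe_range, Set.mem_Iio] at ha hb
      rcases lt_trichotomy a b with h | h | h
      · exact absurd hab (key a b h hb)
      · exact h
      · exact absurd hab.symm (key b a h ha)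
    have himg : Finset.image f (Finset.range m) = ρ.toFinset := by
      apply Finset.eq_of_subset_of_card_le
      · intro v hv
        obtain ⟨k, hk, rfl⟩ := Finset.mem_image.1 hv
        rw [Finset.mem_range] at hk
        exact List.mem_toFinset.2
          (List.drop_subset _ _ (List.take_subset _ _ (hf k hk).1))
      · rw [Finset.card_image_of_injOn hinj, Finset.card_range]
    have hdne : ρ.drop (m * m) ≠ [] := by
      rw [← List.length_pos_iff, List.length_drop]; omega
    have hx : (ρ.drop (m * m)).head hdne ∈ ρ.drop (m * m) := List.head_mem hdne
    have hxρ : (ρ.drop (m * m)).head hdne ∈ ρ.toFinset :=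
      List.mem_toFinset.2 (List.drop_subset _ _ hx)
    rw [← himg] at hxρ
    obtain ⟨k, hk, hfk⟩ := Finset.mem_image.1 hxρ
    rw [Finset.mem_range] at hk
    apply (hf k hk).2
    rw [hfk]
    exact hdropsub _ _ (Nat.mul_le_mul_right m (by omega)) hx
  obtain ⟨k, hk, hgood⟩ := hgood
  have hk1m : (k + 1) * m ≤ m * m := Nat.mul_le_mul_right m hk
  have hkm1 : (k + 1) * m = k * m + m := by ring
  have hkm : k * m + m + 1 ≤ ρ.length := by omega
  set W := (ρ.drop (k * m)).take (m + 1) with hW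
  have hWlen : W.length = m + 1 := by
    rw [hW, List.length_take, List.length_drop]; omega
  have hWsub : W ⊆ ρ := fun v hv => List.drop_subset _ _ (List.take_subset _ _ hv)
  have hWnd : ¬ W.Nodup := by
    intro hnd
    have h1 : W.toFinset.card = m + 1 := by
      rw [List.toFinset_card_of_nodup hnd, hWlen]
    have h2 : W.toFinset ⊆ ρ.toFinset := by
      intro v hv
      exact List.mem_toFinset.2 (hWsub (List.mem_toFinset.1 hv))
    have := Finset.card_le_card h2
    omega
  obtain ⟨l₁, x, l₂, l₃, hWe, hnd2⟩ := split_first_repeat W hWnd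
  have hlens : l₁.length + 1 + l₂.length + 1 + l₃.length = m + 1 := by
    have := hWlen
    rw [hWe] at this
    simp [List.length_append] at this
    omega
  have hρe : ρ = ρ.take (k * m) ++ W ++ ρ.drop (k * m + (m + 1)) := by
    rw [hW, ← List.drop_drop]
    rw [List.append_assoc, List.take_append_drop, List.take_append_drop]
  -- the middle prefix A = l₁ ++ x :: l₂ of W has length ≤ m
  have htakemW : W.take m = (l₁ ++ x :: l₂) ++ (x :: l₃).take (m - (l₁ ++ x :: l₂).length) := by
    rw [hWe, List.take_append]
    congr 1
    apply List.take_of_length_le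
    simp; omega
  have hl₂takem : ∀ v ∈ l₂, v ∈ (ρ.drop (k * m)).take m := by
    intro v hv
    have h1 : v ∈ W.take m := by
      rw [htakemW]
      simp only [List.mem_append, List.mem_cons]
      tauto
    rw [hW, List.take_take] at h1
    simpa [Nat.min_def] using h1
  have hdk : ρ.drop (k * m) = W ++ ρ.drop (k * m + (m + 1)) := by
    rw [hW, ← List.drop_drop, List.take_append_drop]
  have h1 : ρ.drop ((k + 1) * m) = W.drop m ++ ρ.drop (k * m + (m + 1)) := by
    rw [hkm1, ← List.drop_drop, hdk, List.drop_append]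
    congr 1
    rw [hWlen]
    simp
  have hdropmW : W.drop m ⊆ x :: l₃ := by
    rw [hWe, List.drop_append]
    intro v hv
    rw [List.mem_append] at hv
    rcases hv with hv | hv
    · rw [List.drop_eq_nil_of_le (by simp; omega)] at hv
      simp at hv
    · exact List.drop_subset _ _ hv
  have hdroptail : ∀ v ∈ ρ.drop ((k + 1) * m),
      v ∈ x :: (l₃ ++ ρ.drop (k * m + (m + 1))) := by
    intro v hv
    rw [h1, List.mem_append] at hv
    rcases hv with hv | hv
    · have := hdropmW hv
      simp only [List.mem_cons, List.mem_append] at this ⊢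
      tauto
    · simp only [List.mem_cons, List.mem_append]
      tauto
  refine ⟨ρ.take (k * m) ++ l₁, x, l₂, l₃ ++ ρ.drop (k * m + (m + 1)), ?_, hnd2, ?_⟩
  · conv_lhs => rw [hρe, hWe]
    simp [List.append_assoc]
  · ext v
    simp only [List.mem_toFinset]
    constructor
    · intro hv
      rw [hρe, hWe]
      simp only [List.mem_append, List.mem_cons] at hv ⊢
      tauto
    · intro hv
      rw [hρe, hWe] at hv
      by_cases hvl₂ : v ∈ l₂
      · have h2 := hdroptail v (hgood v (hl₂takem v hvl₂))
        simp only [List.mem_cons, List.mem_append] at h2 ⊢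
        tauto
      · simp only [List.mem_append, List.mem_cons] at hv ⊢
        tauto

lemma main_aux (E : V → V → Prop) : ∀ (n : ℕ) (ρ : List V), ρ.length ≤ n → IsRun E ρ →
    ∃ (γ : List V) (cs : Multiset (List V)),
      IsRun E γ ∧
      γ.head? = ρ.head? ∧ γ.getLast? = ρ.getLast? ∧
      γ.length - 1 < ρ.toFinset.card ^ 2 ∧
      γ.toFinset = ρ.toFinset ∧
      (∀ c ∈ cs, IsSimpleCycle E c ∧ c.toFinset ⊆ ρ.toFinset) ∧
      ObtainedBy E γ cs ρ := by
  intro n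
  induction n with
  | zero =>
    intro ρ hl hr
    exact absurd (List.length_eq_zero_iff.1 (Nat.le_zero.1 hl)) hr.1
  | succ n ih =>
    intro ρ hl hr
    by_cases hshort : ρ.length - 1 < ρ.toFinset.card ^ 2
    · exact ⟨ρ, 0, hr, rfl, rfl, hshort, rfl, by simp, ObtainedBy.refl ρ⟩
    · push_neg at hshort
      obtain ⟨l, q, ω, r, heq, hnd, hfin⟩ := extract_good_cycle ρ hr.1 hshort
      have hchain := hr.2
      have hc2 : (l ++ (q :: ω ++ q :: r)).Chain' E := by
        rw [← List.append_assoc, ← heq]; exact hchain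
      obtain ⟨hcl, hcrest, hlink⟩ := List.isChain_append.1 hc2
      have hqr : (q :: r).Chain' E := hchain.suffix ⟨l ++ q :: ω, by rw [heq]⟩
      have hkept : (l ++ q :: r).Chain' E := by
        refine List.isChain_append.2 ⟨hcl, hqr, ?_⟩
        intro a ha b hb
        apply hlink a ha
        simp only [List.cons_append, List.head?_cons, Option.mem_def,
          Option.some.injEq] at hb ⊢
        exact hb
      have hrun' : IsRun E (l ++ q :: r) := ⟨by simp, hkept⟩
      have hlen' : (l ++ q :: r).length ≤ n := by
        have h1 : ρ.length = l.length + (ω.length + (r.length + 2)) := by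
          rw [heq]; simp [List.length_append]; omega
        have h2 : (l ++ q :: r).length = l.length + (r.length + 1) := by
          simp [List.length_append]
        omega
      obtain ⟨γ, cs, hγrun, hh, hgl, hblen, hbfin, hcs, hob⟩ := ih (l ++ q :: r) hlen' hrun'
      have hhead : (l ++ q :: r).head? = ρ.head? := by
        rw [heq]; cases l <;> simp
      have hlast : (l ++ q :: r).getLast? = ρ.getLast? := by
        rw [heq, List.getLast?_append_cons, List.getLast?_append_cons]
      have hcyc_infix : (q :: ω ++ [q]) <:+: ρ := ⟨l, r, by rw [heq]; simp⟩
      have hcchain : (q :: ω ++ [q]).Chain' E := hchain.infix hcyc_infix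
      have hcsimple : IsSimpleCycle E (q :: ω ++ [q]) := by
        refine ⟨⟨by simp, hcchain⟩, by simp, ?_, ?_⟩
        · rw [List.getLast?_concat]; rfl
        · intro v
          rw [List.count_append]
          have h1 : (q :: ω).count v ≤ 1 := List.nodup_iff_count_le_one.1 hnd v
          have h2 : ([q] : List V).count v ≤ 1 := by simpa using (List.count_le_length (a := v) (l := [q]))
          omega
      have hcsub : (q :: ω ++ [q]).toFinset ⊆ ρ.toFinset := by
        intro v hv
        exact List.mem_toFinset.2 (hcyc_infix.subset (List.mem_toFinset.1 hv))
      refine ⟨γ, (q :: ω ++ [q]) ::ₘ cs, hγrun, hh.trans hhead, hgl.trans hlast,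
        ?_, ?_, ?_, ?_⟩
      · rwa [hfin] at hblen
      · rw [hbfin, hfin]
      · intro c' hc'
        rcases Multiset.mem_cons.1 hc' with rfl | hc'
        · exact ⟨hcsimple, hcsub⟩
        · obtain ⟨h1, h2⟩ := hcs c' hc'
          exact ⟨h1, hfin ▸ h2⟩
      · rw [heq]
        exact ObtainedBy.step γ cs l r ω q hob

theorem stmt_17 (E : V → V → Prop) (ρ : List V) (hρ : IsRun E ρ) :
    ∃ (γ : List V) (cs : Multiset (List V)),
      IsRun E γ ∧
      γ.head? = ρ.head? ∧ γ.getLast? = ρ.getLast? ∧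
      γ.length - 1 < ρ.toFinset.card ^ 2 ∧
      γ.toFinset = ρ.toFinset ∧
      (∀ c ∈ cs, IsSimpleCycle E c ∧ c.toFinset ⊆ ρ.toFinset) ∧
      ObtainedBy E γ cs ρ :=
  main_aux E ρ.length ρ le_rfl hρ
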